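/- arXiv:1110.5498 — 3 statements merged into one kernel-verified Lean document; each statement's English description precedes it below -/
import Mathlib

section
/- Let f : Z → X be a surjective 1-Lipschitz map between metric spaces, and suppose Z and X both have Hausdorff dimension n with μ_H^n(X) = μ_H^n(Z) < ∞. Then for every Borel subset A ⊆ Z with f⁻¹(f(A)) = A, one has μ_H^n(f(A)) = μ_H^n(A). -/
open MeasureTheory

/-- If `f : Z → X` is a surjective 1-Lipschitz map between metric spaces of
Hausdorff dimension `n` with equal finite total `n`-dimensional Hausdorff
measure, then `f` preserves the `n`-dimensional Hausdorff measure of every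
Borel set `A ⊆ Z` that is saturated under `f` (i.e. `f⁻¹(f(A)) = A`). -/
theorem volume_preserving_on_saturated_sets {Z X : Type*}
    [MetricSpace Z] [MeasurableSpace Z] [BorelSpace Z]
    [MetricSpace X] [MeasurableSpace X] [BorelSpace X]
    (f : Z → X) (hsurj : Function.Surjective f) (hf : LipschitzWith 1 f)
    (n : ℝ) (hn : 0 ≤ n)
    (hdZ : dimH (Set.univ : Set Z) = ENNReal.ofReal n)
    (hdX : dimH (Set.univ : Set X) = ENNReal.ofReal n)
    (heq : μH[n] (Set.univ : Set X) = μH[n] (Set.univ : Set Z))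
    (hfin : μH[n] (Set.univ : Set Z) < ⊤)
    (A : Set Z) (hA : MeasurableSet A) (hsat : f ⁻¹' (f '' A) = A) :
    μH[n] (f '' A) = μH[n] A := by
  have himg : ∀ s : Set Z, μH[n] (f '' s) ≤ μH[n] s := by
    intro s
    have := hf.hausdorffMeasure_image_le hn s
    simpa using this
  have hle : μH[n] (f '' A) ≤ μH[n] A := himg A
  have hleC : μH[n] (f '' Aᶜ) ≤ μH[n] Aᶜ := himg Aᶜ
  have hcover : f '' A ∪ f '' Aᶜ = Set.univ := by
    rw [← Set.image_union, Set.union_compl_self, Set.image_univ,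
      Set.range_eq_univ.2 hsurj]
  have hsum : μH[n] A + μH[n] Aᶜ = μH[n] (Set.univ : Set Z) := by
    rw [measure_add_measure_compl hA]
  have hXle : μH[n] (Set.univ : Set X) ≤ μH[n] (f '' A) + μH[n] (f '' Aᶜ) := by
    rw [← hcover]; exact measure_union_le _ _
  have hAfin : μH[n] A < ⊤ := lt_of_le_of_lt (measure_mono (Set.subset_univ _)) hfin
  have hAcfin : μH[n] Aᶜ < ⊤ := lt_of_le_of_lt (measure_mono (Set.subset_univ _)) hfin
  refine le_antisymm hle ?_
  have key : μH[n] A + μH[n] Aᶜ ≤ μH[n] (f '' A) + μH[n] Aᶜ := by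
    calc μH[n] A + μH[n] Aᶜ = μH[n] (Set.univ : Set X) := by rw [hsum, heq]
      _ ≤ μH[n] (f '' A) + μH[n] (f '' Aᶜ) := hXle
      _ ≤ μH[n] (f '' A) + μH[n] Aᶜ := add_le_add le_rfl hleC
  exact ENNReal.le_of_add_le_add_left hAcfin.ne (by rwa [add_comm, add_comm (μH[n] (f '' A))] at key)
end

section
/- For ε > 0 and two balls of radius ε in Euclidean ℝⁿ whose centers are at distance s ∈ (0, 2ε], the volume of their union equals vol(B_ε(ℝⁿ)) + 2ε · vol(B_ε(ℝ^{n-1})) · ∫_θ^{π/2} sinⁿ(t) dt, where θ ∈ [0, π/2] satisfies cos θ = s/(2ε). -/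
open MeasureTheory Real

noncomputable def phiAux (m : ℕ) (ε a : ℝ) : ℝ := if 0 < a then (Real.sqrt a / ε) ^ m else 0

lemma phiAux_nonneg (m : ℕ) {ε : ℝ} (hε : 0 < ε) (a : ℝ) : 0 ≤ phiAux m ε a := by
  unfold phiAux; split_ifs with h
  · positivity
  · exact le_refl 0

lemma phiAux_mono (m : ℕ) {ε : ℝ} (hε : 0 < ε) : Monotone (phiAux m ε) := by
  intro a b hab
  unfold phiAux
  split_ifs with ha hb hb
  · have h1 : Real.sqrt a / ε ≤ Real.sqrt b / ε := by
      gcongr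
    exact pow_le_pow_left₀ (by positivity) h1 m
  · exact absurd (lt_of_lt_of_le ha hab) hb
  · positivity
  · exact le_refl 0

lemma phiAux_le_one (m : ℕ) {ε : ℝ} (hε : 0 < ε) {a : ℝ} (ha : a ≤ ε ^ 2) :
    phiAux m ε a ≤ 1 := by
  unfold phiAux
  split_ifs with h
  · apply pow_le_one₀ (by positivity)
    rw [div_le_one hε]
    calc Real.sqrt a ≤ Real.sqrt (ε ^ 2) := Real.sqrt_le_sqrt ha
    _ = ε := Real.sqrt_sq hε.le
  · exact zero_le_one

lemma phiAux_measurable (m : ℕ) (ε : ℝ) : Measurable (phiAux m ε) := by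
  unfold phiAux
  exact Measurable.ite (measurableSet_lt measurable_const measurable_id)
    ((Real.continuous_sqrt.measurable.div_const ε).pow_const m) measurable_const

lemma phiAux_nonpos_eq_zero (m : ℕ) (ε : ℝ) {a : ℝ} (ha : a ≤ 0) : phiAux m ε a = 0 := by
  unfold phiAux; rw [if_neg (not_lt.mpr ha)]

lemma integrable_phiAux_comp (m : ℕ) {ε : ℝ} (hε : 0 < ε) (q : ℝ → ℝ) (hq : Measurable q)
    (hbound : ∀ t, q t ≤ ε ^ 2) {a b : ℝ} (hsupp : ∀ t, t ∉ Set.Icc a b → q t ≤ 0) :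
    Integrable (fun t => phiAux m ε (q t)) := by
  have hmeas : Measurable fun t => phiAux m ε (q t) := (phiAux_measurable m ε).comp hq
  refine Integrable.mono' (g := Set.indicator (Set.Icc a b) fun _ => (1:ℝ)) ?_
    hmeas.aestronglyMeasurable ?_
  · exact (integrable_indicator_iff measurableSet_Icc).mpr
      ((integrableOn_const_iff (by simp)).mpr (Or.inr (by rw [Real.volume_Icc]; exact ENNReal.ofReal_lt_top)))
  · refine Filter.Eventually.of_forall fun t => ?_
    rw [Real.norm_eq_abs, abs_of_nonneg (phiAux_nonneg m hε _)]
    by_cases ht : t ∈ Set.Icc a b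
    · rw [Set.indicator_of_mem ht]
      exact phiAux_le_one m hε (hbound t)
    · rw [Set.indicator_of_notMem ht, phiAux_nonpos_eq_zero m ε (hsupp t ht)]

lemma max_split_integral (m : ℕ) {ε s : ℝ} (hε : 0 < ε) (hs : 0 < s) (hs2 : s ≤ 2 * ε) :
    ∫ t : ℝ, phiAux m ε (max (ε^2 - t^2) (ε^2 - (t-s)^2))
      = (∫ t : ℝ, phiAux m ε (ε^2 - t^2))
        + ∫ t in (-(s/2))..(s/2), phiAux m ε (ε^2 - t^2) := by
  set g : ℝ → ℝ := fun t => phiAux m ε (ε^2 - t^2) with hgdef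
  set h : ℝ → ℝ := fun t => phiAux m ε (max (ε^2 - t^2) (ε^2 - (t-s)^2)) with hhdef
  have hg : Integrable g := by
    refine integrable_phiAux_comp m hε _ (by fun_prop) (fun t => by nlinarith [sq_nonneg t])
      (a := -ε) (b := ε) (fun t ht => ?_)
    rw [Set.mem_Icc, not_and_or, not_le, not_le] at ht
    rcases ht with ht | ht <;> nlinarith
  have hh : Integrable h := by
    refine integrable_phiAux_comp m hε _ (by fun_prop) ?_ (a := -ε) (b := s + ε) (fun t ht => ?_)
    · intro t
      rw [max_le_iff]
      constructor <;> nlinarith [sq_nonneg t, sq_nonneg (t - s)]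
    · rw [Set.mem_Icc, not_and_or, not_le, not_le] at ht
      rw [max_le_iff]
      rcases ht with ht | ht <;> constructor <;> nlinarith
  -- restrict to interval
  have h0 : ∀ t ∉ Set.Ioc (-ε) (s + ε), h t = 0 := by
    intro t ht
    rw [Set.mem_Ioc, not_and_or, not_lt, not_le] at ht
    refine phiAux_nonpos_eq_zero m ε ?_
    rw [max_le_iff]
    rcases ht with ht | ht <;> constructor <;> nlinarith
  have h0g : ∀ t ∉ Set.Ioc (-ε) ε, g t = 0 := by
    intro t ht
    rw [Set.mem_Ioc, not_and_or, not_lt, not_le] at ht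
    refine phiAux_nonpos_eq_zero m ε ?_
    rcases ht with ht | ht <;> nlinarith
  have hH : (∫ t : ℝ, h t) = ∫ t in (-ε)..(s + ε), h t := by
    rw [intervalIntegral.integral_of_le (by linarith),
      setIntegral_eq_integral_of_forall_compl_eq_zero h0]
  have hG : (∫ t : ℝ, g t) = ∫ t in (-ε)..ε, g t := by
    rw [intervalIntegral.integral_of_le (by linarith),
      setIntegral_eq_integral_of_forall_compl_eq_zero h0g]
  -- split h at s/2
  have hsplit : (∫ t in (-ε)..(s + ε), h t)
      = (∫ t in (-ε)..(s/2), h t) + ∫ t in (s/2)..(s + ε), h t :=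
    (intervalIntegral.integral_add_adjacent_intervals hh.intervalIntegrable
      hh.intervalIntegrable).symm
  have hleft : (∫ t in (-ε)..(s/2), h t) = ∫ t in (-ε)..(s/2), g t := by
    refine intervalIntegral.integral_congr fun t ht => ?_
    rw [Set.uIcc_of_le (by linarith)] at ht
    have ht2 : t ≤ s / 2 := ht.2
    show phiAux m ε _ = phiAux m ε _
    rw [max_eq_left (by nlinarith)]
  have hright : (∫ t in (s/2)..(s + ε), h t) = ∫ t in (s/2)..(s + ε), g (t - s) := by
    refine intervalIntegral.integral_congr fun t ht => ?_
    rw [Set.uIcc_of_le (by linarith)] at ht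
    have ht1 : s / 2 ≤ t := ht.1
    show phiAux m ε _ = phiAux m ε _
    rw [max_eq_right (by nlinarith)]
  have hshift : (∫ t in (s/2)..(s + ε), g (t - s)) = ∫ t in (-(s/2))..ε, g t := by
    rw [intervalIntegral.integral_comp_sub_right g s, show s + ε - s = ε by ring,
      show s / 2 - s = -(s/2) by ring]
  have hsplitg : (∫ t in (-ε)..ε, g t) = (∫ t in (-ε)..(-(s/2)), g t) + ∫ t in (-(s/2))..ε, g t :=
    (intervalIntegral.integral_add_adjacent_intervals hg.intervalIntegrable
      hg.intervalIntegrable).symm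
  have hsplitl : (∫ t in (-ε)..(s/2), g t)
      = (∫ t in (-ε)..(-(s/2)), g t) + ∫ t in (-(s/2))..(s/2), g t :=
    (intervalIntegral.integral_add_adjacent_intervals hg.intervalIntegrable
      hg.intervalIntegrable).symm
  rw [hH, hG, hsplit, hleft, hright, hshift, hsplitg, hsplitl]
  ring

lemma cap_integral (m : ℕ) {ε s : ℝ} (hε : 0 < ε) (hs : 0 < s) (hs2 : s ≤ 2 * ε) :
    ∫ t in (-(s/2))..(s/2), phiAux m ε (ε^2 - t^2)
      = 2 * ε * ∫ t in Real.arccos (s / (2 * ε))..(π/2), Real.sin t ^ (m + 1) := by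
  have h2ε : (0:ℝ) < 2 * ε := by linarith
  have hx0 : 0 < s / (2 * ε) := by positivity
  have hx1 : s / (2 * ε) ≤ 1 := by rw [div_le_one h2ε]; linarith
  set θ := Real.arccos (s / (2 * ε)) with hθdef
  have hθ0 : 0 ≤ θ := Real.arccos_nonneg _
  have hθπ : θ ≤ π / 2 := Real.arccos_le_pi_div_two.mpr hx0.le
  have hcosθ : Real.cos θ = s / (2 * ε) := Real.cos_arccos (by linarith) hx1
  set Gc : ℝ → ℝ := fun u => Real.sqrt (max (ε^2 - u^2) 0) ^ m with hGdef
  have hGc : Continuous Gc := by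
    apply Continuous.pow
    apply Real.continuous_sqrt.comp
    exact (continuous_const.sub (continuous_pow 2)).max continuous_const
  -- substitution
  have hderiv : ∀ x ∈ Set.uIcc θ (π/2), HasDerivAt (fun t => ε * Real.cos t) (-(ε * Real.sin x)) x := by
    intro x _
    have := (Real.hasDerivAt_cos x).const_mul ε
    rwa [mul_neg] at this
  have hcont : ContinuousOn (fun x => -(ε * Real.sin x)) (Set.uIcc θ (π/2)) :=
    ((continuous_const.mul Real.continuous_sin).neg).continuousOn
  have hsub := intervalIntegral.integral_comp_smul_deriv hderiv hcont hGc
  rw [Real.cos_pi_div_two, mul_zero, hcosθ,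
    show ε * (s / (2 * ε)) = s / 2 by field_simp] at hsub
  have hLHS : (∫ x in θ..(π/2), (-(ε * Real.sin x)) • (Gc ∘ (fun t => ε * Real.cos t)) x)
      = -(ε ^ (m+1) * ∫ t in θ..(π/2), Real.sin t ^ (m+1)) := by
    rw [← intervalIntegral.integral_const_mul, ← intervalIntegral.integral_neg]
    refine intervalIntegral.integral_congr fun x hx => ?_
    rw [Set.uIcc_of_le (by linarith)] at hx
    have hx0' : 0 ≤ x := le_trans hθ0 hx.1
    have hxπ : x ≤ π := le_trans hx.2 (by linarith [Real.pi_pos])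
    have hsin : 0 ≤ Real.sin x := Real.sin_nonneg_of_nonneg_of_le_pi hx0' hxπ
    have h1 : ε^2 - (ε * Real.cos x)^2 = (ε * Real.sin x)^2 := by
      have := Real.sin_sq_add_cos_sq x
      nlinarith
    show (-(ε * Real.sin x)) • Gc (ε * Real.cos x) = _
    rw [smul_eq_mul, hGdef]
    simp only
    rw [h1, max_eq_left (sq_nonneg _), Real.sqrt_sq (by positivity)]
    ring
  rw [hLHS, intervalIntegral.integral_symm (a := (0:ℝ)) (b := s/2)] at hsub
  -- so ∫ from 0 to s/2 of Gc = ε^(m+1) * ∫ sin^(m+1)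
  have hhalf : (∫ u in (0:ℝ)..(s/2), Gc u) = ε ^ (m+1) * ∫ t in θ..(π/2), Real.sin t ^ (m+1) := by
    linarith [hsub]
  -- evenness
  have heven : (∫ u in (-(s/2))..(0:ℝ), Gc u) = ∫ u in (0:ℝ)..(s/2), Gc u := by
    have := intervalIntegral.integral_comp_neg (a := (0:ℝ)) (b := s/2) (f := Gc)
    rw [neg_zero] at this
    rw [← this]
    refine intervalIntegral.integral_congr fun x _ => ?_
    simp only [hGdef, neg_sq]
  have hsplitc : (∫ u in (-(s/2))..(s/2), Gc u)
      = (∫ u in (-(s/2))..(0:ℝ), Gc u) + ∫ u in (0:ℝ)..(s/2), Gc u :=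
    (intervalIntegral.integral_add_adjacent_intervals
      (hGc.intervalIntegrable _ _) (hGc.intervalIntegrable _ _)).symm
  -- relate phiAux to Gc a.e.
  have hae : (∫ t in (-(s/2))..(s/2), phiAux m ε (ε^2 - t^2))
      = ∫ t in (-(s/2))..(s/2), Gc t / ε ^ m := by
    apply intervalIntegral.integral_congr_ae
    have hz : volume ({ε, -ε} : Set ℝ) = 0 := (Set.toFinite _).measure_zero volume
    filter_upwards [measure_eq_zero_iff_ae_notMem.mp hz] with x hx hmem
    simp only [Set.mem_insert_iff, Set.mem_singleton_iff, not_or] at hx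
    rw [Set.uIoc_of_le (by linarith)] at hmem
    have hx1' : -(s/2) < x := hmem.1
    have hx2' : x ≤ s/2 := hmem.2
    have hlt : x^2 < ε^2 := by
      rcases lt_or_eq_of_le (le_trans hx2' (by linarith) : x ≤ ε) with h | h
      · nlinarith
      · exact absurd h hx.1
    show phiAux m ε _ = _
    rw [phiAux, if_pos (by nlinarith), hGdef]
    simp only
    rw [max_eq_left (by nlinarith), div_pow]
  rw [hae, intervalIntegral.integral_div, hsplitc, heven, hhalf]
  have hεm : (ε:ℝ) ^ m ≠ 0 := by positivity
  field_simp
  ring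


/-- Fubini slicing for subsets of Euclidean space defined by a condition on the
tail coordinates depending on the first coordinate. -/
lemma slice_lintegral (m : ℕ) (q : ℝ → ℝ) (hq : Measurable q) :
    volume {x : EuclideanSpace ℝ (Fin (m + 1)) | ∑ j : Fin m, x j.succ ^ 2 < q (x 0)}
      = ∫⁻ t : ℝ, volume {y : EuclideanSpace ℝ (Fin m) | ∑ j : Fin m, y j ^ 2 < q t} := by
  have hmeas2 : MeasurableSet {p : ℝ × (Fin m → ℝ) | ∑ j : Fin m, p.2 j ^ 2 < q p.1} := by
    apply measurableSet_lt
    · exact (Finset.measurable_sum _ fun j _ => ((measurable_pi_apply j).comp measurable_snd).pow_const 2)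
    · exact hq.comp measurable_fst
  have hmeas1 : MeasurableSet {f : Fin (m+1) → ℝ | ∑ j : Fin m, f j.succ ^ 2 < q (f 0)} := by
    apply measurableSet_lt
    · exact Finset.measurable_sum _ fun j _ => (measurable_pi_apply j.succ).pow_const 2
    · exact hq.comp (measurable_pi_apply 0)
  have h1 : {x : EuclideanSpace ℝ (Fin (m + 1)) | ∑ j : Fin m, x j.succ ^ 2 < q (x 0)}
      = (MeasurableEquiv.toLp 2 (Fin (m+1) → ℝ)).symm ⁻¹'
        {f : Fin (m+1) → ℝ | ∑ j : Fin m, f j.succ ^ 2 < q (f 0)} := rfl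
  rw [h1, (EuclideanSpace.volume_preserving_symm_measurableEquiv_toLp _).measure_preimage
    hmeas1.nullMeasurableSet]
  have h2 : {f : Fin (m+1) → ℝ | ∑ j : Fin m, f j.succ ^ 2 < q (f 0)}
      = (MeasurableEquiv.piFinSuccAbove (fun _ : Fin (m+1) => ℝ) 0) ⁻¹'
        {p : ℝ × (Fin m → ℝ) | ∑ j : Fin m, p.2 j ^ 2 < q p.1} := by
    ext f
    simp [MeasurableEquiv.piFinSuccAbove_apply, Fin.zero_succAbove, Fin.tail]
  rw [h2, (volume_preserving_piFinSuccAbove (fun _ : Fin (m+1) => ℝ) 0).measure_preimage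
    hmeas2.nullMeasurableSet]
  rw [show (volume : Measure (ℝ × (Fin m → ℝ))) = (volume : Measure ℝ).prod volume from rfl]
  rw [Measure.prod_apply hmeas2]
  refine lintegral_congr fun t => ?_
  have h3 : Prod.mk t ⁻¹' {p : ℝ × (Fin m → ℝ) | ∑ j : Fin m, p.2 j ^ 2 < q p.1}
      = (MeasurableEquiv.toLp 2 (Fin m → ℝ)).symm.symm ⁻¹'
        {y : EuclideanSpace ℝ (Fin m) | ∑ j : Fin m, y j ^ 2 < q t} := rfl
  rw [h3, ((EuclideanSpace.volume_preserving_symm_measurableEquiv_toLp _).symm).measure_preimage]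
  apply MeasurableSet.nullMeasurableSet
  apply measurableSet_lt
  · exact Finset.measurable_sum _ fun j _ => ((measurable_pi_apply j).comp
      (MeasurableEquiv.toLp 2 (Fin m → ℝ)).symm.measurable).pow_const 2
  · exact measurable_const


lemma ball_vol_scale (m : ℕ) {ε r : ℝ} (hε : 0 < ε) (hr : 0 < r) :
    volume (Metric.ball (0 : EuclideanSpace ℝ (Fin m)) r)
      = ENNReal.ofReal ((r / ε) ^ m) * volume (Metric.ball (0 : EuclideanSpace ℝ (Fin m)) ε) := by
  rcases Nat.eq_zero_or_pos m with hm | hm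
  · subst hm
    rw [volume_euclideanSpace_eq_dirac]
    simp [Metric.mem_ball, hr, hε]
  · have : Nonempty (Fin m) := ⟨⟨0, hm⟩⟩
    rw [EuclideanSpace.volume_ball, EuclideanSpace.volume_ball]
    rw [← mul_assoc]
    congr 1
    rw [Fintype.card_fin, ← ENNReal.ofReal_pow hr.le, ← ENNReal.ofReal_pow hε.le,
      ← ENNReal.ofReal_mul (by positivity)]
    congr 1
    rw [← mul_pow, div_mul_cancel₀ _ hε.ne']

lemma slice_ball_vol (m : ℕ) {ε : ℝ} (hε : 0 < ε) (a : ℝ) :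
    volume {y : EuclideanSpace ℝ (Fin m) | ∑ j : Fin m, y j ^ 2 < a}
      = ENNReal.ofReal (if 0 < a then (Real.sqrt a / ε) ^ m else 0)
          * volume (Metric.ball (0 : EuclideanSpace ℝ (Fin m)) ε) := by
  have hset : {y : EuclideanSpace ℝ (Fin m) | ∑ j : Fin m, y j ^ 2 < a}
      = Metric.ball 0 (Real.sqrt (max a 0)) := by
    ext y
    rw [Metric.mem_ball, dist_zero_right, Set.mem_setOf_eq]
    have hnorm : ‖y‖ = Real.sqrt (∑ j : Fin m, y j ^ 2) := by
      rw [EuclideanSpace.norm_eq]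
      congr 1
      exact Finset.sum_congr rfl fun j _ => by rw [Real.norm_eq_abs, sq_abs]
    rw [hnorm, Real.sqrt_lt_sqrt_iff (by positivity)]
    constructor
    · intro h; exact lt_max_of_lt_left h
    · intro h
      rcases lt_max_iff.mp h with h' | h'
      · exact h'
      · exact absurd h' (not_lt.mpr (by positivity))
  rw [hset]
  split_ifs with ha
  · rw [ball_vol_scale m hε (by simpa [Real.sqrt_pos] using (by rw [max_eq_left ha.le]; exact ha : (0:ℝ) < max a 0))]
    rw [max_eq_left ha.le]
  · rw [max_eq_right (not_lt.mp ha), Real.sqrt_zero, Metric.ball_zero, measure_empty,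
      ENNReal.ofReal_zero, zero_mul]

lemma dist_lt_iff_slice {m : ℕ} {ε : ℝ} (hε : 0 < ε) (x z : EuclideanSpace ℝ (Fin (m+1))) :
    dist x z < ε ↔ ∑ j : Fin m, (x j.succ - z j.succ)^2 < ε^2 - (x 0 - z 0)^2 := by
  rw [EuclideanSpace.dist_eq, Real.sqrt_lt' hε]
  have h : ∀ i, dist (x i) (z i) ^ 2 = (x i - z i)^2 := fun i => by rw [Real.dist_eq, sq_abs]
  simp_rw [h, Fin.sum_univ_succ, lt_sub_iff_add_lt']

set_option maxHeartbeats 1000000 in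
/-- The volume of the union of two overlapping Euclidean `ε`-balls whose centers
are at distance `s ∈ (0, 2ε]` equals
`vol(B_ε(ℝⁿ)) + 2ε · vol(B_ε(ℝⁿ⁻¹)) · ∫_θ^{π/2} sinⁿ t dt`, where `cos θ = s/(2ε)`. -/
theorem volume_union_two_balls (n : ℕ) (hn : 1 ≤ n) (ε s : ℝ)
    (hε : 0 < ε) (hs : 0 < s) (hs2 : s ≤ 2 * ε)
    (x₁ x₂ : EuclideanSpace ℝ (Fin n)) (hd : dist x₁ x₂ = s) :
    volume (Metric.ball x₁ ε ∪ Metric.ball x₂ ε)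
      = volume (Metric.ball (0 : EuclideanSpace ℝ (Fin n)) ε)
        + ENNReal.ofReal (2 * ε *
            (volume (Metric.ball (0 : EuclideanSpace ℝ (Fin (n - 1))) ε)).toReal *
            ∫ t in Real.arccos (s / (2 * ε))..(π / 2), Real.sin t ^ n) := by
  obtain ⟨m, rfl⟩ : ∃ m, n = m + 1 := ⟨n - 1, (Nat.succ_pred_eq_of_pos hn).symm⟩
  rw [Nat.add_sub_cancel]
  set V := volume (Metric.ball (0 : EuclideanSpace ℝ (Fin m)) ε) with hVdef
  -- Step 1 : reduce to balls centered at 0 and c = s•e₀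
  set c : EuclideanSpace ℝ (Fin (m+1)) := EuclideanSpace.single 0 s with hcdef
  have hc0 : c 0 = s := by simp [hcdef, EuclideanSpace.single_apply]
  have hcsucc : ∀ j : Fin m, c j.succ = 0 := fun j => by
    simp [hcdef, EuclideanSpace.single_apply, Fin.succ_ne_zero]
  have hnormc : ‖c‖ = s := by
    rw [hcdef, EuclideanSpace.norm_single, Real.norm_eq_abs, abs_of_pos hs]
  set v : EuclideanSpace ℝ (Fin (m+1)) := x₂ - x₁ with hvdef
  have hnormv : ‖v‖ = s := by rw [hvdef, ← dist_eq_norm, dist_comm]; exact hd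
  set R := Submodule.reflection (ℝ ∙ (v - c))ᗮ with hRdef
  have hRv : R v = c := Submodule.reflection_sub (by rw [hnormv, hnormc])
  have hΦ : MeasurePreserving (fun x => R (x - x₁)) volume volume :=
    R.measurePreserving.comp (measurePreserving_sub_right volume x₁)
  have hset : Metric.ball x₁ ε ∪ Metric.ball x₂ ε
      = (fun x => R (x - x₁)) ⁻¹' (Metric.ball 0 ε ∪ Metric.ball c ε) := by
    ext x
    have e1 : dist (R (x - x₁)) 0 = dist x x₁ := by
      rw [dist_zero_right, LinearIsometryEquiv.norm_map, dist_eq_norm]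
    have e2 : dist (R (x - x₁)) c = dist x x₂ := by
      rw [← hRv, dist_eq_norm, ← LinearIsometryEquiv.map_sub, LinearIsometryEquiv.norm_map,
        hvdef, show x - x₁ - (x₂ - x₁) = x - x₂ by abel, dist_eq_norm]
    simp only [Set.mem_preimage, Set.mem_union, Metric.mem_ball, e1, e2]
  rw [hset, hΦ.measure_preimage
    ((Metric.isOpen_ball.union Metric.isOpen_ball).measurableSet.nullMeasurableSet)]
  -- Step 2 : slice
  have hunion_set : Metric.ball (0 : EuclideanSpace ℝ (Fin (m+1))) ε ∪ Metric.ball c ε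
      = {x : EuclideanSpace ℝ (Fin (m+1)) |
          ∑ j : Fin m, x j.succ ^ 2 < max (ε^2 - (x 0)^2) (ε^2 - (x 0 - s)^2)} := by
    ext x
    simp only [Set.mem_union, Metric.mem_ball, Set.mem_setOf_eq, lt_max_iff]
    apply or_congr
    · rw [dist_lt_iff_slice hε x 0]
      simp
    · rw [dist_lt_iff_slice hε x c, hc0]
      simp only [hcsucc, sub_zero]
  have hball_set : Metric.ball (0 : EuclideanSpace ℝ (Fin (m+1))) ε
      = {x : EuclideanSpace ℝ (Fin (m+1)) | ∑ j : Fin m, x j.succ ^ 2 < ε^2 - (x 0)^2} := by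
    ext x
    rw [Metric.mem_ball, Set.mem_setOf_eq, dist_lt_iff_slice hε x 0]
    simp
  have hqmax : Measurable (fun t : ℝ => max (ε^2 - t^2) (ε^2 - (t - s)^2)) := by fun_prop
  have hq1 : Measurable (fun t : ℝ => ε^2 - t^2) := by fun_prop
  -- volume of sliced sets
  have key : ∀ (q : ℝ → ℝ), Measurable q →
      volume {x : EuclideanSpace ℝ (Fin (m+1)) | ∑ j : Fin m, x j.succ ^ 2 < q (x 0)}
        = ∫⁻ t : ℝ, ENNReal.ofReal (phiAux m ε (q t)) * V := by
    intro q hq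
    rw [slice_lintegral m q hq]
    refine lintegral_congr fun t => ?_
    rw [slice_ball_vol m hε (q t)]
    rfl
  have hofreal : ∀ (q : ℝ → ℝ), Measurable q → Integrable (fun t => phiAux m ε (q t)) →
      (∫⁻ t : ℝ, ENNReal.ofReal (phiAux m ε (q t)) * V)
        = ENNReal.ofReal (∫ t : ℝ, phiAux m ε (q t)) * V := by
    intro q hq hint
    have hmeas : Measurable fun t : ℝ => ENNReal.ofReal (phiAux m ε (q t)) :=
      ENNReal.measurable_ofReal.comp ((phiAux_measurable m ε).comp hq)
    rw [lintegral_mul_const _ hmeas,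
      ← ofReal_integral_eq_lintegral_ofReal hint
        (Filter.Eventually.of_forall fun t => phiAux_nonneg m hε _)]
  have hint1 : Integrable (fun t => phiAux m ε (ε^2 - t^2)) := by
    refine integrable_phiAux_comp m hε _ hq1 (fun t => by nlinarith [sq_nonneg t])
      (a := -ε) (b := ε) (fun t ht => ?_)
    rw [Set.mem_Icc, not_and_or, not_le, not_le] at ht
    rcases ht with ht | ht <;> nlinarith
  have hintmax : Integrable (fun t => phiAux m ε (max (ε^2 - t^2) (ε^2 - (t - s)^2))) := by
    refine integrable_phiAux_comp m hε _ hqmax ?_ (a := -ε) (b := s + ε) (fun t ht => ?_)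
    · intro t
      rw [max_le_iff]
      constructor <;> nlinarith [sq_nonneg t, sq_nonneg (t - s)]
    · rw [Set.mem_Icc, not_and_or, not_le, not_le] at ht
      rw [max_le_iff]
      rcases ht with ht | ht <;> constructor <;> nlinarith
  rw [hunion_set, key _ hqmax, hofreal _ hqmax hintmax]
  have hBall : volume (Metric.ball (0 : EuclideanSpace ℝ (Fin (m+1))) ε)
      = ENNReal.ofReal (∫ t : ℝ, phiAux m ε (ε^2 - t^2)) * V := by
    rw [hball_set, key _ hq1, hofreal _ hq1 hint1]
  rw [hBall, max_split_integral m hε hs hs2, cap_integral m hε hs hs2]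
  have hBnonneg : 0 ≤ ∫ t : ℝ, phiAux m ε (ε^2 - t^2) :=
    integral_nonneg fun t => phiAux_nonneg m hε _
  have hsin_nonneg : 0 ≤ ∫ t in Real.arccos (s / (2 * ε))..(π/2), Real.sin t ^ (m+1) := by
    apply intervalIntegral.integral_nonneg
    · exact le_trans (Real.arccos_le_pi_div_two.mpr (by positivity)) (le_refl _)
    · intro u hu
      have h1 : 0 ≤ u := le_trans (Real.arccos_nonneg _) hu.1
      have h2 : u ≤ π := le_trans hu.2 (by linarith [Real.pi_pos])
      exact pow_nonneg (Real.sin_nonneg_of_nonneg_of_le_pi h1 h2) _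
  rw [ENNReal.ofReal_add hBnonneg (by positivity), add_mul]
  congr 1
  have hVne : V ≠ ⊤ := (measure_ball_lt_top).ne
  rw [show V = ENNReal.ofReal V.toReal by rw [ENNReal.ofReal_toReal hVne]]
  rw [← ENNReal.ofReal_mul (by positivity)]
  congr 1
  rw [ENNReal.toReal_ofReal ENNReal.toReal_nonneg]
  exact mul_right_comm (2 * ε) _ _
end

section
/- Let x₁, …, x_{N+1} be points on a line in ℝⁿ with consecutive distances |x_i x_{i+1}| = s_i ∈ (0, 2ε²] and ε small. Then vol(⋃_{i=1}^{N+1} B_ε(x_i)) = vol(B_ε(ℝⁿ)) + vol(B_ε(ℝ^{n-1})) · Σ_{i=1}^N s_i + O(ε^{n+1}) · Σ_{i=1}^N s_i, i.e., the volume of the ε-ball tube along a segment of length L is vol(B_ε(ℝⁿ)) + vol(B_ε(ℝ^{n-1})) · L up to an error of order ε^{n+1} · L. -/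
open MeasureTheory Real

private lemma pow_sub_pow_le_aux {a b : ℝ} (hb : 0 ≤ b) (hba : b ≤ a) :
    ∀ m : ℕ, a ^ m - b ^ m ≤ m * a ^ (m - 1) * (a - b) := by
  intro m
  induction m with
  | zero => simp
  | succ m ih =>
    have ha : 0 ≤ a := hb.trans hba
    have h3 : a * ((m : ℝ) * a ^ (m - 1) * (a - b)) ≤ (m : ℝ) * a ^ m * (a - b) := by
      rcases Nat.eq_zero_or_pos m with rfl | hm
      · simp
      · have hr : a * a ^ (m - 1) = a ^ m := by
          rw [← pow_succ']
          congr 1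
          omega
        rw [show a * ((m : ℝ) * a ^ (m - 1) * (a - b))
            = (m : ℝ) * (a * a ^ (m - 1)) * (a - b) from by ring, hr]
    have h2 : a * (a ^ m - b ^ m) ≤ a * ((m : ℝ) * a ^ (m - 1) * (a - b)) :=
      mul_le_mul_of_nonneg_left ih ha
    have h4 : (a - b) * b ^ m ≤ (a - b) * a ^ m :=
      mul_le_mul_of_nonneg_left (pow_le_pow_left₀ hb hba m) (by linarith)
    have hgoal : ((m + 1 : ℕ) : ℝ) * a ^ ((m + 1) - 1) * (a - b)
        = (m : ℝ) * a ^ m * (a - b) + (a - b) * a ^ m := by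
      push_cast
      ring
    have h1 : a ^ (m + 1) - b ^ (m + 1) = a * (a ^ m - b ^ m) + (a - b) * b ^ m := by ring
    rw [h1, hgoal]
    linarith

private lemma aux_slice_upper {ε s Qw t : ℝ} (hs : 0 < s) (hQ : 0 ≤ Qw)
    (h1 : (t - s) ^ 2 + Qw < ε ^ 2) (h2 : ε ^ 2 ≤ t ^ 2 + Qw) :
    Real.sqrt (ε ^ 2 - Qw) ≤ t ∧ t < s + Real.sqrt (ε ^ 2 - Qw) := by
  have hQε : Qw < ε ^ 2 := by nlinarith [sq_nonneg (t - s)]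
  have hh2 : Real.sqrt (ε ^ 2 - Qw) ^ 2 = ε ^ 2 - Qw := Real.sq_sqrt (by linarith)
  have hh0 : 0 ≤ Real.sqrt (ε ^ 2 - Qw) := Real.sqrt_nonneg _
  set h := Real.sqrt (ε ^ 2 - Qw)
  have hts : (t - s) ^ 2 < h ^ 2 := by linarith
  have h3 : t - s < h := by nlinarith
  have h4 : -h < t - s := by nlinarith
  have h5 : h ^ 2 ≤ t ^ 2 := by linarith
  refine ⟨?_, by linarith⟩
  by_contra hcon
  push_neg at hcon
  nlinarith

private lemma aux_slice_lower {ε s Qw t : ℝ} (hs : 0 < s) (hQ : 0 ≤ Qw)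
    (hw : Qw < ε ^ 2 - s ^ 2 / 4)
    (ht1 : Real.sqrt (ε ^ 2 - Qw) ≤ t) (ht2 : t < s + Real.sqrt (ε ^ 2 - Qw)) :
    (t - s) ^ 2 + Qw < ε ^ 2 ∧ ¬ t ^ 2 + Qw < ε ^ 2 := by
  have hh2 : Real.sqrt (ε ^ 2 - Qw) ^ 2 = ε ^ 2 - Qw := Real.sq_sqrt (by nlinarith)
  have hh0 : 0 ≤ Real.sqrt (ε ^ 2 - Qw) := Real.sqrt_nonneg _
  set h := Real.sqrt (ε ^ 2 - Qw)
  have hhs : s < 2 * h := by nlinarith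
  constructor
  · have h3 : t - s < h := by linarith
    have h4 : -h < t - s := by linarith
    nlinarith
  · push_neg
    nlinarith

private lemma key_vol (m : ℕ) {ε s : ℝ} (hε : 0 < ε) (hs : 0 < s)
    (hs2 : s ^ 2 / 4 ≤ ε ^ 2)
    (p q : EuclideanSpace ℝ (Fin (m + 1))) (hpq : dist p q = s) :
    ENNReal.ofReal s *
        volume (Metric.ball (0 : EuclideanSpace ℝ (Fin m)) (Real.sqrt (ε ^ 2 - s ^ 2 / 4)))
      ≤ volume (Metric.ball q ε \ Metric.ball p ε) ∧
    volume (Metric.ball q ε \ Metric.ball p ε)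
      ≤ ENNReal.ofReal s * volume (Metric.ball (0 : EuclideanSpace ℝ (Fin m)) ε) := by
  classical
  set u : EuclideanSpace ℝ (Fin (m + 1)) := s⁻¹ • (q - p) with hu_def
  have hqp : ‖q - p‖ = s := by rw [← dist_eq_norm, dist_comm, hpq]
  have hu : ‖u‖ = 1 := by
    rw [hu_def, norm_smul, hqp, norm_inv, Real.norm_of_nonneg hs.le, inv_mul_cancel₀ hs.ne']
  have horth : Orthonormal ℝ (({0} : Set (Fin (m + 1))).restrict (fun _ => u)) := by
    constructor
    · intro i; exact hu
    · intro i j hij; exact absurd (Subsingleton.elim i j) hij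
  obtain ⟨B, hB⟩ := horth.exists_orthonormalBasis_extension_of_card_eq (by simp)
  have hB0 : B 0 = u := hB 0 rfl
  have hrepr_qp : B.repr (q - p) = EuclideanSpace.single 0 s := by
    have h1 : q - p = s • u := by rw [hu_def, smul_smul, mul_inv_cancel₀ hs.ne', one_smul]
    rw [h1, _root_.map_smul, ← hB0, B.repr_self]
    ext j
    by_cases h : j = 0 <;> simp [EuclideanSpace.single_apply, h]
  -- the measure preserving coordinate map
  set Φ : ℝ × (Fin m → ℝ) → EuclideanSpace ℝ (Fin (m + 1)) := fun z =>
    p + B.repr.symm ((MeasurableEquiv.toLp 2 (Fin (m + 1) → ℝ))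
      ((MeasurableEquiv.piFinSuccAbove (fun _ : Fin (m + 1) => ℝ) 0).symm z)) with hΦ_def
  have hΦ : MeasurePreserving Φ volume volume := by
    exact (measurePreserving_add_left volume p).comp
      (B.measurePreserving_repr_symm.comp
        (((EuclideanSpace.volume_preserving_symm_measurableEquiv_toLp (Fin (m + 1))).symm).comp
          ((volume_preserving_piFinSuccAbove (fun _ : Fin (m + 1) => ℝ) 0).symm)))
  -- distance computation
  have hdist : ∀ z : ℝ × (Fin m → ℝ), ∀ x : EuclideanSpace ℝ (Fin (m + 1)), ∀ c : ℝ,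
      B.repr (x - p) = EuclideanSpace.single 0 c →
      dist (Φ z) x ^ 2 = (z.1 - c) ^ 2 + ∑ j, z.2 j ^ 2 := by
    rintro ⟨t, w⟩ x c hc
    set v : EuclideanSpace ℝ (Fin (m + 1)) :=
      (MeasurableEquiv.toLp 2 (Fin (m + 1) → ℝ))
        ((MeasurableEquiv.piFinSuccAbove (fun _ : Fin (m + 1) => ℝ) 0).symm (t, w)) with hv_def
    have hv : ∀ j : Fin (m + 1), v j = (Fin.insertNth 0 t w : ∀ _ : Fin (m+1), ℝ) j := by
      intro j
      simp [hv_def, MeasurableEquiv.piFinSuccAbove]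
    have hsub : Φ (t, w) - x = B.repr.symm (v - EuclideanSpace.single 0 c) := by
      have hxp : B.repr.symm (EuclideanSpace.single 0 c) = x - p := by
        rw [← hc, LinearIsometryEquiv.symm_apply_apply]
      rw [map_sub, hxp]
      simp only [hΦ_def, hv_def]
      abel
    have hnorm : dist (Φ (t, w)) x = ‖v - EuclideanSpace.single 0 c‖ := by
      rw [dist_eq_norm, hsub, LinearIsometryEquiv.norm_map]
    rw [hnorm, EuclideanSpace.norm_eq]
    rw [Real.sq_sqrt (by positivity)]
    have : ∀ j : Fin (m + 1), ‖(v - EuclideanSpace.single 0 c : EuclideanSpace ℝ (Fin (m+1))) j‖ ^ 2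
        = ((Fin.insertNth 0 t w : ∀ _ : Fin (m+1), ℝ) j - EuclideanSpace.single (0 : Fin (m+1)) c j) ^ 2 := by
      intro j
      rw [Real.norm_eq_abs, sq_abs, PiLp.sub_apply, hv j]
    rw [Finset.sum_congr rfl fun j _ => this j]
    rw [Fin.sum_univ_succAbove _ 0]
    simp [Fin.insertNth_apply_same, Fin.insertNth_apply_succAbove,
      EuclideanSpace.single_apply, Fin.succ_ne_zero]
  set Q : (Fin m → ℝ) → ℝ := fun w => ∑ j, w j ^ 2 with hQ_def
  have hQc : Continuous Q := by
    apply continuous_finset_sum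
    intro j _
    exact (continuous_apply j).pow 2
  have hQ0 : ∀ w, 0 ≤ Q w := fun w => Finset.sum_nonneg fun j _ => sq_nonneg _
  set T : Set (ℝ × (Fin m → ℝ)) :=
    {z | (z.1 - s) ^ 2 + Q z.2 < ε ^ 2 ∧ ¬ (z.1 ^ 2 + Q z.2 < ε ^ 2)} with hT_def
  have hT : MeasurableSet T := by
    apply MeasurableSet.inter
    · exact measurableSet_lt (((continuous_fst.sub continuous_const).pow 2).add
        (hQc.comp continuous_snd)).measurable measurable_const
    · exact (measurableSet_lt ((continuous_fst.pow 2).add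
        (hQc.comp continuous_snd)).measurable measurable_const).compl
  -- dist characterizations
  have hrepr_pp : B.repr (p - p) = EuclideanSpace.single 0 (0 : ℝ) := by
    simp
    ext j; simp [EuclideanSpace.single_apply]
  have sq_iff : ∀ d : ℝ, 0 ≤ d → (d < ε ↔ d ^ 2 < ε ^ 2) := by
    intro d hd
    constructor
    · intro h; nlinarith
    · intro h; nlinarith
  have hpre : Φ ⁻¹' (Metric.ball q ε \ Metric.ball p ε) = T := by
    ext z
    have h1 : dist (Φ z) q ^ 2 = (z.1 - s) ^ 2 + Q z.2 := hdist z q s hrepr_qp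
    have h2 : dist (Φ z) p ^ 2 = (z.1 - 0) ^ 2 + Q z.2 := hdist z p 0 hrepr_pp
    simp only [Set.mem_preimage, Set.mem_diff, Metric.mem_ball, hT_def, Set.mem_setOf_eq]
    rw [sq_iff _ dist_nonneg, sq_iff _ dist_nonneg, h1, h2]
    simp [sub_zero]
  have hvolT : volume (Metric.ball q ε \ Metric.ball p ε) = volume T := by
    rw [← hpre, hΦ.measure_preimage
      (measurableSet_ball.diff measurableSet_ball).nullMeasurableSet]
  -- ball volumes as slabs
  have hball : ∀ r : ℝ, 0 ≤ r →
      volume {w : Fin m → ℝ | Q w < r ^ 2}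
        = volume (Metric.ball (0 : EuclideanSpace ℝ (Fin m)) r) := by
    intro r hr
    have hmp : MeasurePreserving (MeasurableEquiv.toLp 2 (Fin m → ℝ)) volume volume :=
      (EuclideanSpace.volume_preserving_symm_measurableEquiv_toLp (Fin m)).symm
    rw [← hmp.measure_preimage measurableSet_ball.nullMeasurableSet]
    congr 1
    ext w
    simp only [Set.mem_preimage, EuclideanSpace.ball_zero_eq _ hr, Set.mem_setOf_eq, hQ_def]
    rfl
  -- slice bounds
  rw [hvolT, Measure.volume_eq_prod, Measure.prod_apply_symm hT]
  constructor
  · -- lower bound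
    have hr2 : (Real.sqrt (ε ^ 2 - s ^ 2 / 4)) ^ 2 = ε ^ 2 - s ^ 2 / 4 :=
      Real.sq_sqrt (by linarith)
    rw [← hball _ (Real.sqrt_nonneg _), hr2]
    have hmeas : MeasurableSet {w : Fin m → ℝ | Q w < ε ^ 2 - s ^ 2 / 4} :=
      measurableSet_lt hQc.measurable measurable_const
    rw [← lintegral_indicator_const hmeas (ENNReal.ofReal s)]
    apply lintegral_mono
    intro w
    rw [Set.indicator_apply]
    split_ifs with hw
    · have hw' : Q w < ε ^ 2 - s ^ 2 / 4 := hw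
      have hsubset : Set.Ico (Real.sqrt (ε ^ 2 - Q w)) (s + Real.sqrt (ε ^ 2 - Q w))
          ⊆ (fun t => (t, w)) ⁻¹' T := by
        intro t ht
        exact aux_slice_lower hs (hQ0 w) hw' ht.1 ht.2
      calc ENNReal.ofReal s
            = volume (Set.Ico (Real.sqrt (ε ^ 2 - Q w)) (s + Real.sqrt (ε ^ 2 - Q w))) := by
              rw [Real.volume_Ico]; congr 1; ring
        _ ≤ volume ((fun t => (t, w)) ⁻¹' T) := measure_mono hsubset
    · exact zero_le
  · -- upper bound
    rw [← hball _ hε.le]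
    have hmeas : MeasurableSet {w : Fin m → ℝ | Q w < ε ^ 2} :=
      measurableSet_lt hQc.measurable measurable_const
    rw [← lintegral_indicator_const hmeas (ENNReal.ofReal s)]
    apply lintegral_mono
    intro w
    rw [Set.indicator_apply]
    split_ifs with hw
    · have hsubset : (fun t => (t, w)) ⁻¹' T
          ⊆ Set.Ico (Real.sqrt (ε ^ 2 - Q w)) (s + Real.sqrt (ε ^ 2 - Q w)) := by
        intro t ht
        obtain ⟨ht1, ht2⟩ := ht
        push_neg at ht2
        exact Set.mem_Ico.mpr (aux_slice_upper hs (hQ0 w) ht1 ht2)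
      calc volume ((fun t => (t, w)) ⁻¹' T)
            ≤ volume (Set.Ico (Real.sqrt (ε ^ 2 - Q w)) (s + Real.sqrt (ε ^ 2 - Q w))) :=
              measure_mono hsubset
        _ = ENNReal.ofReal s := by rw [Real.volume_Ico]; congr 1; ring
    · have hempty : ((fun t => (t, w)) ⁻¹' T) = (∅ : Set ℝ) := by
        ext t
        simp only [Set.mem_preimage, Set.mem_empty_iff_false, iff_false]
        rintro ⟨ht1, -⟩
        have hw' : ¬ Q w < ε ^ 2 := hw
        push_neg at hw'
        have ht1' : (t - s) ^ 2 + Q w < ε ^ 2 := ht1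
        nlinarith [sq_nonneg (t - s)]
      simp only [hempty]
      simp

private lemma union_telescope {n : ℕ} (ε : ℝ) :
    ∀ (N : ℕ) (x : Fin (N + 1) → EuclideanSpace ℝ (Fin n)),
      (∀ i j k : Fin (N + 1), i ≤ j → j ≤ k →
          dist (x i) (x k) = dist (x i) (x j) + dist (x j) (x k)) →
      volume (⋃ i, Metric.ball (x i) ε)
        = volume (Metric.ball (x 0) ε)
          + ∑ i : Fin N, volume (Metric.ball (x i.succ) ε \ Metric.ball (x i.castSucc) ε) := by
  intro N
  induction N with
  | zero =>
    intro x _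
    have h1 : ∀ i : Fin 1, Metric.ball (x i) ε = Metric.ball (x 0) ε := fun i => by
      rw [Fin.eq_zero i]
    rw [Set.iUnion_congr h1, Set.iUnion_const]
    simp
  | succ N ih =>
    intro x hx
    have hsplit : (⋃ i, Metric.ball (x i) ε)
        = (⋃ i : Fin (N + 1), Metric.ball (x i.castSucc) ε)
            ∪ Metric.ball (x (Fin.last (N + 1))) ε := by
      ext y
      simp only [Set.mem_iUnion, Set.mem_union]
      constructor
      · rintro ⟨i, hi⟩
        rcases Fin.eq_castSucc_or_eq_last i with ⟨j, rfl⟩ | rfl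
        · exact Or.inl ⟨j, hi⟩
        · exact Or.inr hi
      · rintro (⟨j, hj⟩ | h)
        · exact ⟨j.castSucc, hj⟩
        · exact ⟨_, h⟩
    have hdiff : Metric.ball (x (Fin.last (N + 1))) ε
          \ (⋃ i : Fin (N + 1), Metric.ball (x i.castSucc) ε)
        = Metric.ball (x (Fin.last (N + 1))) ε
          \ Metric.ball (x ((Fin.last N).castSucc)) ε := by
      apply Set.Subset.antisymm
      · apply Set.diff_subset_diff_right
        exact Set.subset_iUnion (fun i : Fin (N + 1) => Metric.ball (x i.castSucc) ε) (Fin.last N)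
      · rintro y ⟨hy1, hy2⟩
        refine ⟨hy1, ?_⟩
        intro hmem
        rw [Set.mem_iUnion] at hmem
        obtain ⟨j, hj⟩ := hmem
        apply hy2
        have hW : Wbtw ℝ (x j.castSucc) (x ((Fin.last N).castSucc)) (x (Fin.last (N + 1))) := by
          rw [← dist_add_dist_eq_iff]
          exact (hx j.castSucc ((Fin.last N).castSucc) (Fin.last (N + 1))
            (Fin.castSucc_le_castSucc_iff.mpr (Fin.le_last j)) (Fin.le_last _)).symm
        have hseg : segment ℝ (x j.castSucc) (x (Fin.last (N + 1))) ⊆ Metric.ball y ε :=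
          (convex_ball y ε).segment_subset (Metric.mem_ball_comm.mp hj)
            (Metric.mem_ball_comm.mp hy1)
        exact Metric.mem_ball_comm.mp (hseg (mem_segment_iff_wbtw.mpr hW))
    have hx' : ∀ i j k : Fin (N + 1), i ≤ j → j ≤ k →
        dist (x i.castSucc) (x k.castSucc)
          = dist (x i.castSucc) (x j.castSucc) + dist (x j.castSucc) (x k.castSucc) :=
      fun i j k hij hjk => hx _ _ _ (Fin.castSucc_le_castSucc_iff.mpr hij)
        (Fin.castSucc_le_castSucc_iff.mpr hjk)
    have hih := ih (fun i => x i.castSucc) hx'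
    rw [hsplit, ← Set.union_diff_self,
      measure_union disjoint_sdiff_self_right
        (measurableSet_ball.diff (MeasurableSet.iUnion fun _ => measurableSet_ball)),
      hdiff, hih, Fin.sum_univ_castSucc]
    simp only [Fin.succ_castSucc, Fin.succ_last, Fin.castSucc_zero]
    rw [add_assoc]


/-- Volume of an `ε`-ball tube along a segment: for collinear points
`x₁, …, x_{N+1}` in `ℝⁿ` with consecutive distances `sᵢ ∈ (0, 2ε²]`,
`vol(⋃ B_ε(xᵢ)) = vol(B_ε(ℝⁿ)) + vol(B_ε(ℝⁿ⁻¹)) · Σ sᵢ` up to an error of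
order `ε^{n+1} · Σ sᵢ`. -/
theorem volume_ball_tube_along_segment (n : ℕ) (hn : 1 ≤ n) :
    ∃ C > (0 : ℝ), ∃ ε₀ > (0 : ℝ), ∀ ε ∈ Set.Ioo (0 : ℝ) ε₀, ∀ N : ℕ,
      ∀ x : Fin (N + 1) → EuclideanSpace ℝ (Fin n),
        (∀ i : Fin N, 0 < dist (x i.castSucc) (x i.succ) ∧
          dist (x i.castSucc) (x i.succ) ≤ 2 * ε ^ 2) →
        (∀ i j k : Fin (N + 1), i ≤ j → j ≤ k →
          dist (x i) (x k) = dist (x i) (x j) + dist (x j) (x k)) →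
        |(volume (⋃ i, Metric.ball (x i) ε)).toReal
            - ((volume (Metric.ball (0 : EuclideanSpace ℝ (Fin n)) ε)).toReal
              + (volume (Metric.ball (0 : EuclideanSpace ℝ (Fin (n - 1))) ε)).toReal
                * ∑ i : Fin N, dist (x i.castSucc) (x i.succ))|
          ≤ C * ε ^ (n + 1) * ∑ i : Fin N, dist (x i.castSucc) (x i.succ) := by
  obtain ⟨m, rfl⟩ : ∃ m, n = m + 1 := ⟨n - 1, (Nat.succ_pred_eq_of_pos hn).symm⟩
  set c : ℝ := Real.sqrt π ^ m / Real.Gamma (m / 2 + 1) with hc_def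
  have hc : 0 < c := by
    apply div_pos (pow_pos (Real.sqrt_pos.mpr Real.pi_pos) m)
    apply Real.Gamma_pos_of_pos
    positivity
  have hVm : ∀ r : ℝ, 0 < r →
      (volume (Metric.ball (0 : EuclideanSpace ℝ (Fin m)) r)).toReal = r ^ m * c := by
    intro r hr
    rcases Nat.eq_zero_or_pos m with rfl | hm
    · have huniv : Metric.ball (0 : EuclideanSpace ℝ (Fin 0)) r = Set.univ := by
        ext y
        simp only [Metric.mem_ball, Set.mem_univ, iff_true]
        rw [Subsingleton.elim y 0]
        simpa using hr
      have hmp : MeasurePreserving (MeasurableEquiv.toLp 2 (Fin 0 → ℝ)) volume volume :=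
        (EuclideanSpace.volume_preserving_symm_measurableEquiv_toLp (Fin 0)).symm
      have h1 : volume (Set.univ : Set (EuclideanSpace ℝ (Fin 0))) = 1 := by
        rw [← hmp.measure_preimage MeasurableSet.univ.nullMeasurableSet, Set.preimage_univ,
          MeasureTheory.volume_pi, Measure.pi_univ]
        simp
      rw [huniv, h1]
      simp [hc_def, Real.Gamma_one]
    · haveI : Nonempty (Fin m) := ⟨⟨0, hm⟩⟩
      have hcnn : (0:ℝ) ≤ Real.sqrt π ^ m / Real.Gamma ((m : ℝ) / 2 + 1) :=
        le_of_lt (div_pos (pow_pos (Real.sqrt_pos.mpr Real.pi_pos) _)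
          (Real.Gamma_pos_of_pos (by positivity)))
      rw [EuclideanSpace.volume_ball]
      simp only [Fintype.card_fin]
      rw [ENNReal.toReal_mul, ← ENNReal.ofReal_pow hr.le, ENNReal.toReal_ofReal (by positivity),
        ENNReal.toReal_ofReal hcnn]
  refine ⟨(m : ℝ) * c + 1, by positivity, 1, one_pos, ?_⟩
  rintro ε ⟨hε0, hε1⟩ N x hgap hcol
  set s : Fin N → ℝ := fun i => dist (x i.castSucc) (x i.succ) with hs_def
  have hs0 : ∀ i, 0 < s i := fun i => (hgap i).1
  have hL0 : 0 ≤ ∑ i, s i := Finset.sum_nonneg fun i _ => (hs0 i).le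
  set A : Fin N → Set (EuclideanSpace ℝ (Fin (m + 1))) :=
    fun i => Metric.ball (x i.succ) ε \ Metric.ball (x i.castSucc) ε with hA_def
  have hAfin : ∀ i, volume (A i) ≠ ⊤ := fun i =>
    ((measure_mono Set.diff_subset).trans_lt measure_ball_lt_top).ne
  have htr : (volume (⋃ i, Metric.ball (x i) ε)).toReal
      = (volume (Metric.ball (0 : EuclideanSpace ℝ (Fin (m + 1))) ε)).toReal
        + ∑ i : Fin N, (volume (A i)).toReal := by
    rw [union_telescope ε N x hcol, Measure.addHaar_ball_center volume (x 0) ε,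
      ENNReal.toReal_add measure_ball_lt_top.ne (by
        exact (ENNReal.sum_lt_top.mpr fun i _ => (hAfin i).lt_top).ne),
      ENNReal.toReal_sum (fun i _ => hAfin i)]
  -- per-gap estimate
  have hper : ∀ i : Fin N,
      |(volume (A i)).toReal - ε ^ m * c * s i| ≤ (m : ℝ) * c * ε ^ (m + 2) * s i := by
    intro i
    have hsi := hs0 i
    have hsi2 : s i ≤ 2 * ε ^ 2 := (hgap i).2
    have hε2 : ε ^ 2 < 1 := by nlinarith
    have h4 : s i ^ 2 ≤ 4 * ε ^ 4 := by nlinarith [mul_le_mul hsi2 hsi2 hsi.le (by positivity : (0:ℝ) ≤ 2 * ε ^ 2)]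
    have h5 : ε ^ 4 < ε ^ 2 := by
      nlinarith [mul_pos (mul_pos hε0 hε0) (show (0:ℝ) < 1 - ε ^ 2 by linarith)]
    have hsq : s i ^ 2 / 4 ≤ ε ^ 2 := by linarith
    obtain ⟨hlo, hup⟩ := key_vol m hε0 hsi hsq (x i.castSucc) (x i.succ) rfl
    set r₀ : ℝ := Real.sqrt (ε ^ 2 - s i ^ 2 / 4) with hr₀_def
    have hr₀0 : 0 ≤ r₀ := Real.sqrt_nonneg _
    have hr₀2 : r₀ ^ 2 = ε ^ 2 - s i ^ 2 / 4 := Real.sq_sqrt (by linarith)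
    have hr₀pos : 0 < r₀ := Real.sqrt_pos.mpr (by linarith)
    have hr₀ε : r₀ ≤ ε := by nlinarith
    -- toReal versions
    have hupR : (volume (A i)).toReal ≤ s i * (ε ^ m * c) := by
      have h1 : (volume (A i)).toReal
          ≤ (ENNReal.ofReal (s i) * volume (Metric.ball (0 : EuclideanSpace ℝ (Fin m)) ε)).toReal := by
        apply ENNReal.toReal_mono _ hup
        exact ENNReal.mul_ne_top ENNReal.ofReal_ne_top measure_ball_lt_top.ne
      rwa [ENNReal.toReal_mul, ENNReal.toReal_ofReal hsi.le, hVm ε hε0] at h1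
    have hloR : s i * (r₀ ^ m * c) ≤ (volume (A i)).toReal := by
      have h1 : (ENNReal.ofReal (s i) *
            volume (Metric.ball (0 : EuclideanSpace ℝ (Fin m)) r₀)).toReal
          ≤ (volume (A i)).toReal := ENNReal.toReal_mono (hAfin i) hlo
      rwa [ENNReal.toReal_mul, ENNReal.toReal_ofReal hsi.le, hVm r₀ hr₀pos] at h1
    have hεr : ε - r₀ ≤ ε ^ 3 := by
      have hsum : 0 < ε + r₀ := by linarith
      nlinarith [hr₀2, h4, hsum, mul_nonneg (pow_nonneg hε0.le 3) hr₀0]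
    have hppow := pow_sub_pow_le_aux hr₀0 hr₀ε m
    have hmp : (m : ℝ) * ε ^ (m - 1) * (ε - r₀) ≤ (m : ℝ) * ε ^ (m + 2) := by
      have h1 : (m : ℝ) * ε ^ (m - 1) * (ε - r₀) ≤ (m : ℝ) * ε ^ (m - 1) * ε ^ 3 := by
        apply mul_le_mul_of_nonneg_left hεr
        positivity
      refine h1.trans ?_
      rcases m with _ | k
      · simp
      · rw [Nat.succ_sub_one, mul_assoc, ← pow_add]
    have hdiffpow : ε ^ m - r₀ ^ m ≤ (m : ℝ) * ε ^ (m + 2) := le_trans hppow hmp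
    have h6 : s i * ((ε ^ m - r₀ ^ m) * c) ≤ s i * ((m : ℝ) * ε ^ (m + 2) * c) :=
      mul_le_mul_of_nonneg_left (mul_le_mul_of_nonneg_right hdiffpow hc.le) hsi.le
    have e1 : ε ^ m * c * s i - s i * (r₀ ^ m * c) = s i * ((ε ^ m - r₀ ^ m) * c) := by ring
    have e2 : s i * ((m : ℝ) * ε ^ (m + 2) * c) = (m : ℝ) * c * ε ^ (m + 2) * s i := by ring
    have h7 : 0 ≤ (m : ℝ) * c * ε ^ (m + 2) * s i :=
      mul_nonneg (mul_nonneg (mul_nonneg m.cast_nonneg hc.le) (pow_nonneg hε0.le _)) hsi.le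
    have e3 : ε ^ m * c * s i = s i * (ε ^ m * c) := by ring
    rw [abs_le]
    generalize (volume (A i)).toReal = v at hupR hloR ⊢
    constructor
    · linarith
    · linarith
  -- assemble
  have hdiff_eq : (volume (⋃ i, Metric.ball (x i) ε)).toReal
        - ((volume (Metric.ball (0 : EuclideanSpace ℝ (Fin (m + 1))) ε)).toReal
          + (volume (Metric.ball (0 : EuclideanSpace ℝ (Fin m)) ε)).toReal * ∑ i, s i)
      = ∑ i : Fin N, ((volume (A i)).toReal - ε ^ m * c * s i) := by
    rw [htr, hVm ε hε0, Finset.sum_sub_distrib, ← Finset.mul_sum]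
    ring
  have hfinal : |(volume (⋃ i, Metric.ball (x i) ε)).toReal
        - ((volume (Metric.ball (0 : EuclideanSpace ℝ (Fin (m + 1))) ε)).toReal
          + (volume (Metric.ball (0 : EuclideanSpace ℝ (Fin m)) ε)).toReal * ∑ i : Fin N, s i)|
      ≤ ((m : ℝ) * c + 1) * ε ^ (m + 1 + 1) * ∑ i : Fin N, s i := by
    rw [hdiff_eq]
    calc |∑ i : Fin N, ((volume (A i)).toReal - ε ^ m * c * s i)|
        ≤ ∑ i : Fin N, |(volume (A i)).toReal - ε ^ m * c * s i| :=
          Finset.abs_sum_le_sum_abs _ _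
      _ ≤ ∑ i : Fin N, (m : ℝ) * c * ε ^ (m + 2) * s i :=
          Finset.sum_le_sum fun i _ => hper i
      _ ≤ ∑ i : Fin N, ((m : ℝ) * c + 1) * ε ^ (m + 1 + 1) * s i := by
          apply Finset.sum_le_sum
          intro i _
          have h2 : ε ^ (m + 1 + 1) = ε ^ (m + 2) := by ring
          rw [h2]
          have h3 := (hs0 i).le
          have hp := (pow_pos hε0 (m + 2)).le
          nlinarith [mul_nonneg hp h3]
      _ = ((m : ℝ) * c + 1) * ε ^ (m + 1 + 1) * ∑ i, s i := by rw [← Finset.mul_sum]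
  exact hfinal
end
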